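/- Let X be a second countable Hausdorff topological space and let Γ be a second countable, locally compact, Hausdorff topological group that is not compact, acting continuously on X. Then the following are equivalent: (i) (X, Γ) is k-transitive for every k ∈ ℕ; (ii) (X, Γ) is thick strong mixing; (iii) for every finite collection of nonempty open sets U₁, …, Uₙ, V₁, …, Vₙ ⊆ X, the intersection ⋂_{1 ≤ i ≤ n} N(Uᵢ, Vᵢ) is a thick subset of Γ. -/

import Mathlib

open Pointwise

set_option linter.unusedSectionVars false

/-- A subset `N` of a group `G` is thick if for every finite subset `F ⊆ G`,
`N ∩ ⋂_{γ ∈ F} γN ≠ ∅`. -/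
def IsThick {G : Type*} [Group G] (N : Set G) : Prop :=
  ∀ F : Finset G, (N ∩ ⋂ γ ∈ F, γ • N).Nonempty

/-- `N(A, B) = {γ ∈ G : γA ∩ B ≠ ∅}`. -/
def NSet (G : Type*) {X : Type*} [Group G] [MulAction G X] (A B : Set X) : Set G :=
  {γ : G | ((γ • A) ∩ B).Nonempty}

/-- The system `(X, G)` is `k`-transitive: for all nonempty open sets
`U₁, …, U_k, V₁, …, V_k ⊆ X` there is `γ ∈ G` with `γUᵢ ∩ Vᵢ ≠ ∅` for all `i`. -/
def IsKTrans (G : Type*) (X : Type*) [Group G] [TopologicalSpace X] [MulAction G X]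
    (k : ℕ) : Prop :=
  ∀ U V : Fin k → Set X, (∀ i, IsOpen (U i)) → (∀ i, (U i).Nonempty) →
    (∀ i, IsOpen (V i)) → (∀ i, (V i).Nonempty) →
    ∃ γ : G, ∀ i, ((γ • U i) ∩ V i).Nonempty

/-- The system `(X, G)` is thick strong mixing: there is a thick `N ⊆ G` such that for every
pair of nonempty open `U, V ⊆ X` there is a compact `F ⊆ N` with `γU ∩ V ≠ ∅` for all
`γ ∈ N \ F`. -/
def ThickStrongMixing (G : Type*) (X : Type*) [Group G] [TopologicalSpace G]
    [TopologicalSpace X] [MulAction G X] : Prop :=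
  ∃ N : Set G, IsThick N ∧
    ∀ U V : Set X, IsOpen U → U.Nonempty → IsOpen V → V.Nonempty →
      ∃ F : Set G, IsCompact F ∧ F ⊆ N ∧ ∀ γ ∈ N \ F, ((γ • U) ∩ V).Nonempty

section Aux

variable {X Γ : Type*} [TopologicalSpace X] [Group Γ] [TopologicalSpace Γ]
  [IsTopologicalGroup Γ] [MulAction Γ X] [ContinuousSMul Γ X]

/-- `k`-transitivity for all `k` gives transitivity along any finite index type. -/
lemma kTrans_finite (h : ∀ k, IsKTrans Γ X k) {ι : Type*} [Finite ι]
    (U V : ι → Set X) (hUo : ∀ i, IsOpen (U i)) (hUne : ∀ i, (U i).Nonempty)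
    (hVo : ∀ i, IsOpen (V i)) (hVne : ∀ i, (V i).Nonempty) :
    ∃ γ : Γ, ∀ i, ((γ • U i) ∩ V i).Nonempty := by
  obtain ⟨k, ⟨e⟩⟩ := Finite.exists_equiv_fin ι
  obtain ⟨γ, hγ⟩ := h k (fun j => U (e.symm j)) (fun j => V (e.symm j))
    (fun j => hUo _) (fun j => hUne _) (fun j => hVo _) (fun j => hVne _)
  exact ⟨γ, fun i => by simpa using hγ (e i)⟩

/-- Key strengthening: one can make `γUᵢ ∩ gVᵢ ≠ ∅` uniformly over `g` in a compact set. -/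
lemma kTrans_compact (h : ∀ k, IsKTrans Γ X k) {ι : Type*} [Finite ι]
    (U V : ι → Set X) (hUo : ∀ i, IsOpen (U i)) (hUne : ∀ i, (U i).Nonempty)
    (hVo : ∀ i, IsOpen (V i)) (hVne : ∀ i, (V i).Nonempty)
    {K : Set Γ} (hK : IsCompact K) :
    ∃ γ : Γ, ∀ g ∈ K, ∀ i, ((γ • U i) ∩ (g • V i)).Nonempty := by
  -- for each i, shrink V i to V' i so that w⁻¹ • V' i ⊆ V i for w in a nbhd W i of 1
  have key : ∀ i : ι, ∃ (W : Set Γ) (V' : Set X), IsOpen W ∧ (1 : Γ) ∈ W ∧ IsOpen V' ∧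
      V'.Nonempty ∧ ∀ w ∈ W, ∀ x ∈ V', w⁻¹ • x ∈ V i := by
    intro i
    obtain ⟨v, hv⟩ := hVne i
    have hc : Continuous fun p : Γ × X => p.1⁻¹ • p.2 :=
      (continuous_fst.inv).smul continuous_snd
    have hP : IsOpen {p : Γ × X | p.1⁻¹ • p.2 ∈ V i} := (hVo i).preimage hc
    have hmem : ((1 : Γ), v) ∈ {p : Γ × X | p.1⁻¹ • p.2 ∈ V i} := by simp [hv]
    obtain ⟨W, V', hW, hV', h1W, hvV', hsub⟩ := isOpen_prod_iff.mp hP 1 v hmem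
    exact ⟨W, V', hW, h1W, hV', ⟨v, hvV'⟩,
      fun w hw x hx => hsub (Set.mk_mem_prod hw hx)⟩
  choose W V' hWo h1W hV'o hV'ne hWV' using key
  set W0 : Set Γ := ⋂ i, W i with hW0
  have hW0o : IsOpen W0 := isOpen_iInter_of_finite hWo
  have h1W0 : (1 : Γ) ∈ W0 := Set.mem_iInter.mpr h1W
  have hcover : K ⊆ ⋃ g : Γ, g • W0 := fun g _ =>
    Set.mem_iUnion.mpr ⟨g, ⟨1, h1W0, mul_one g⟩⟩
  obtain ⟨T, hT⟩ := hK.elim_finite_subcover (fun g : Γ => g • W0)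
    (fun g => hW0o.smul g) hcover
  obtain ⟨γ, hγ⟩ := kTrans_finite h (ι := ι × {t // t ∈ T})
    (fun p => U p.1) (fun p => (p.2 : Γ) • V' p.1)
    (fun p => hUo p.1) (fun p => hUne p.1)
    (fun p => (hV'o p.1).smul _)
    (fun p => (hV'ne p.1).smul_set)
  refine ⟨γ, fun g hg i => ?_⟩
  have := hT hg
  simp only [Set.mem_iUnion] at this
  obtain ⟨t, htT, hmem⟩ := this
  obtain ⟨w, hw, hgw⟩ := hmem
  obtain ⟨p, hp1, hp2⟩ := hγ (i, ⟨t, htT⟩)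
  refine ⟨p, hp1, ?_⟩
  obtain ⟨x, hx, rfl⟩ := hp2
  refine ⟨w⁻¹ • x, hWV' i w (Set.mem_iInter.mp hw i) x hx, ?_⟩
  rw [← hgw]
  show (t * w) • w⁻¹ • x = t • x
  rw [smul_smul, mul_assoc, mul_inv_cancel, mul_one]

/-- (i) → (iii). -/
lemma iii_of_i (h : ∀ k, IsKTrans Γ X k) (n : ℕ) (U V : Fin n → Set X)
    (hUo : ∀ i, IsOpen (U i)) (hUne : ∀ i, (U i).Nonempty)
    (hVo : ∀ i, IsOpen (V i)) (hVne : ∀ i, (V i).Nonempty) :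
    IsThick (⋂ i, NSet Γ (U i) (V i)) := by
  intro F
  have hK : IsCompact ((F : Set Γ) ∪ {1}) := F.finite_toSet.isCompact.union isCompact_singleton
  obtain ⟨γ, hγ⟩ := kTrans_compact h U V hUo hUne hVo hVne hK
  have base : ∀ g ∈ (F : Set Γ) ∪ {1}, ∀ i, (((g⁻¹ * γ) • U i) ∩ V i).Nonempty := by
    intro g hg i
    have h2 : ((g⁻¹ : Γ) • ((γ • U i) ∩ (g • V i))).Nonempty := (hγ g hg i).smul_set
    rwa [Set.smul_set_inter, smul_smul, smul_smul, inv_mul_cancel, one_smul] at h2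
  refine ⟨γ, ?_, ?_⟩
  · refine Set.mem_iInter.mpr fun i => ?_
    have := base 1 (Or.inr rfl) i
    simpa [NSet] using this
  · refine Set.mem_iInter.mpr fun g => Set.mem_iInter.mpr fun hg => ?_
    rw [Set.mem_smul_set_iff_inv_smul_mem]
    exact Set.mem_iInter.mpr fun i => base g (Or.inl hg) i

/-- (iii) → (i). -/
lemma i_of_iii
    (h : ∀ (n : ℕ) (U V : Fin n → Set X), (∀ i, IsOpen (U i)) → (∀ i, (U i).Nonempty) →
      (∀ i, IsOpen (V i)) → (∀ i, (V i).Nonempty) → IsThick (⋂ i, NSet Γ (U i) (V i))) :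
    ∀ k, IsKTrans Γ X k := by
  intro k U V hUo hUne hVo hVne
  obtain ⟨γ, hγ, -⟩ := h k U V hUo hUne hVo hVne (∅ : Finset Γ)
  exact ⟨γ, fun i => Set.mem_iInter.mp hγ i⟩

/-- (ii) → (i), using non-compactness of `Γ`. -/
lemma i_of_ii (hnc : ¬ CompactSpace Γ) (h : ThickStrongMixing Γ X) :
    ∀ k, IsKTrans Γ X k := by
  obtain ⟨N, hN, hmix⟩ := h
  intro k U V hUo hUne hVo hVne
  choose F hFc hFN hF using fun i => hmix (U i) (V i) (hUo i) (hUne i) (hVo i) (hVne i)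
  set C : Set Γ := ⋃ i, F i with hC
  have hCc : IsCompact C := isCompact_iUnion hFc
  have hNC : (N \ C).Nonempty := by
    by_contra hne
    have hsub : N ⊆ C := by
      intro x hx
      by_contra hxC
      exact hne ⟨x, hx, hxC⟩
    have hCC : IsCompact (C * C⁻¹) := hCc.mul hCc.inv
    have hne' : C * C⁻¹ ≠ Set.univ := by
      intro he
      exact hnc ⟨he ▸ hCC⟩
    obtain ⟨g, hg⟩ := (Set.ne_univ_iff_exists_notMem _).mp hne'
    obtain ⟨x, hxN, hxg⟩ := hN {g}
    simp only [Finset.mem_singleton, Set.mem_iInter] at hxg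
    have hx2 : g⁻¹ • x ∈ N := Set.mem_smul_set_iff_inv_smul_mem.mp (hxg g rfl)
    refine hg ⟨x, hsub hxN, (g⁻¹ * x)⁻¹, Set.inv_mem_inv.mpr (hsub hx2), ?_⟩
    group
  obtain ⟨γ, hγN, hγC⟩ := hNC
  exact ⟨γ, fun i => hF i γ ⟨hγN, fun hγ => hγC (Set.mem_iUnion.mpr ⟨i, hγ⟩)⟩⟩

end Aux

section Main

variable {X Γ : Type*} [TopologicalSpace X] [SecondCountableTopology X]
  [Group Γ] [TopologicalSpace Γ] [IsTopologicalGroup Γ]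
  [SecondCountableTopology Γ] [LocallyCompactSpace Γ]
  [MulAction Γ X] [ContinuousSMul Γ X]

/-- (i) → (ii). -/
lemma ii_of_i (h : ∀ k, IsKTrans Γ X k) : ThickStrongMixing Γ X := by
  obtain ⟨b, hbc, hbne, hbB⟩ := TopologicalSpace.exists_countable_basis X
  set E := CompactExhaustion.choice Γ with hE
  by_cases hX : (b ×ˢ b : Set (Set X × Set X)).Nonempty
  · -- main case: enumerate pairs of basic open sets
    obtain ⟨f, hf⟩ := (hbc.prod hbc).exists_eq_range hX
    have hfprop : ∀ j : ℕ, IsOpen (f j).1 ∧ (f j).1.Nonempty ∧ IsOpen (f j).2 ∧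
        (f j).2.Nonempty := by
      intro j
      have hj : f j ∈ b ×ˢ b := hf ▸ Set.mem_range_self j
      obtain ⟨h1, h2⟩ := hj
      refine ⟨hbB.isOpen h1, ?_, hbB.isOpen h2, ?_⟩
      · exact Set.nonempty_iff_ne_empty.mpr fun e => hbne (e ▸ h1)
      · exact Set.nonempty_iff_ne_empty.mpr fun e => hbne (e ▸ h2)
    have key : ∀ m : ℕ, ∃ x : Γ, ∀ g ∈ (E m ∪ {1} : Set Γ), ∀ j : Fin m,
        ((x • (f j).1) ∩ (g • (f j).2)).Nonempty := by
      intro m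
      exact kTrans_compact h (fun j : Fin m => (f j).1) (fun j : Fin m => (f j).2)
        (fun j => (hfprop j).1) (fun j => (hfprop j).2.1)
        (fun j => (hfprop j).2.2.1) (fun j => (hfprop j).2.2.2)
        ((E.isCompact m).union isCompact_singleton)
    choose x hx using key
    set B : ℕ → Set Γ := fun m => (fun g : Γ => g⁻¹ * x m) '' (E m ∪ {1}) with hB
    have hBcpt : ∀ m, IsCompact (B m) :=
      fun m => ((E.isCompact m).union isCompact_singleton).image
        (continuous_inv.mul continuous_const)
    refine ⟨⋃ m, B m, ?_, ?_⟩
    · -- thickness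
      intro F
      obtain ⟨m, hm⟩ := E.exists_superset_of_isCompact F.finite_toSet.isCompact
      refine ⟨x m, ?_, ?_⟩
      · exact Set.mem_iUnion.mpr ⟨m, ⟨1, Or.inr rfl, by simp⟩⟩
      · refine Set.mem_iInter.mpr fun g => Set.mem_iInter.mpr fun hg => ?_
        rw [Set.mem_smul_set_iff_inv_smul_mem]
        exact Set.mem_iUnion.mpr ⟨m, ⟨g, Or.inl (hm hg), rfl⟩⟩
    · -- mixing
      intro U V hUo hUne hVo hVne
      obtain ⟨u, hu⟩ := hUne
      obtain ⟨v, hv⟩ := hVne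
      obtain ⟨W, hWb, hWu, hWU⟩ := hbB.exists_subset_of_mem_open hu hUo
      obtain ⟨W', hW'b, hW'v, hW'V⟩ := hbB.exists_subset_of_mem_open hv hVo
      have hWW' : (W, W') ∈ Set.range f := hf ▸ Set.mk_mem_prod hWb hW'b
      obtain ⟨j, hj⟩ := hWW'
      refine ⟨⋃ m ∈ Set.Iic j, B m, (Set.finite_Iic j).isCompact_biUnion
        (fun m _ => hBcpt m), Set.iUnion₂_subset fun m _ => Set.subset_iUnion B m, ?_⟩
      rintro γ ⟨hγN, hγF⟩
      obtain ⟨m, hmB⟩ := Set.mem_iUnion.mp hγN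
      have hmj : j < m := by
        by_contra hle
        push_neg at hle
        exact hγF (Set.mem_biUnion hle hmB)
      obtain ⟨g, hg, rfl⟩ := hmB
      have hne := hx m g hg ⟨j, hmj⟩
      have hjW : (f ((⟨j, hmj⟩ : Fin m) : ℕ)).1 = W := by rw [hj]
      have hjW' : (f ((⟨j, hmj⟩ : Fin m) : ℕ)).2 = W' := by rw [hj]
      rw [hjW, hjW'] at hne
      have h2 : ((g⁻¹ : Γ) • ((x m • W) ∩ (g • W'))).Nonempty := hne.smul_set
      rw [Set.smul_set_inter, smul_smul, smul_smul, inv_mul_cancel, one_smul] at h2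
      exact h2.mono (Set.inter_subset_inter (Set.smul_set_mono hWU) hW'V)
  · -- degenerate case: no nonempty basic open sets, so no nonempty open sets at all
    refine ⟨Set.univ, fun F => ⟨1, trivial, Set.mem_iInter.mpr fun g =>
      Set.mem_iInter.mpr fun _ => by simp [Set.smul_set_univ]⟩, ?_⟩
    intro U V hUo hUne hVo hVne
    exfalso
    obtain ⟨u, hu⟩ := hUne
    obtain ⟨W, hWb, _, _⟩ := hbB.exists_subset_of_mem_open hu hUo
    exact hX ⟨(W, W), Set.mk_mem_prod hWb hWb⟩

end Main

/-- Main theorem: for `X` a second countable Hausdorff space and `Γ` a second countable,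
locally compact, Hausdorff topological group that is not compact, acting continuously on `X`,
the following are equivalent: (i) `(X, Γ)` is `k`-transitive for every `k`;
(ii) `(X, Γ)` is thick strong mixing; (iii) every finite intersection
`⋂ᵢ N(Uᵢ, Vᵢ)` over nonempty open sets is thick. -/
theorem main_equivalence {X Γ : Type*} [TopologicalSpace X] [T2Space X]
    [SecondCountableTopology X]
    [Group Γ] [TopologicalSpace Γ] [IsTopologicalGroup Γ] [T2Space Γ]
    [SecondCountableTopology Γ] [LocallyCompactSpace Γ]
    (hnc : ¬ CompactSpace Γ)
    [MulAction Γ X] [ContinuousSMul Γ X] :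
    ((∀ k : ℕ, IsKTrans Γ X k) ↔ ThickStrongMixing Γ X) ∧
    ((∀ k : ℕ, IsKTrans Γ X k) ↔
      ∀ (n : ℕ) (U V : Fin n → Set X), (∀ i, IsOpen (U i)) → (∀ i, (U i).Nonempty) →
        (∀ i, IsOpen (V i)) → (∀ i, (V i).Nonempty) →
        IsThick (⋂ i, NSet Γ (U i) (V i))) := by
  refine ⟨⟨fun h => ii_of_i h, fun h => i_of_ii hnc h⟩,
    ⟨fun h => iii_of_i h, fun h => i_of_iii h⟩⟩
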